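/- Let ℓ₁, ℓ₂, κ be real numbers with ℓ₁ ≠ 0 and ℓ₂ + κℓ₁ ≠ 0. Set m₁ = (ℓ₂ + κℓ₁)/√(1+κ²) and m₂ = (ℓ₁ - κℓ₂)/√(1+κ²). Then (2/π)(arctan(ℓ₂/ℓ₁) + arctan(m₂/m₁) + arctan(κ)) = sgn(ℓ₁)·sgn(ℓ₂ + κℓ₁). -/

import Mathlib

open Real

lemma arctan_key (a t : ℝ) (h : a + t ≠ 0) :
    Real.arctan a + Real.arctan ((1 - a * t) / (a + t)) + Real.arctan t
      = π / 2 * Real.sign (a + t) := by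
  rcases lt_trichotomy (a * t) 1 with hlt | heq | hgt
  · have h1 : 0 < 1 - a * t := by linarith
    have hu : Real.arctan a + Real.arctan t = Real.arctan ((a + t) / (1 - a * t)) :=
      Real.arctan_add hlt
    have hinv : (1 - a * t) / (a + t) = ((a + t) / (1 - a * t))⁻¹ := by
      rw [inv_div]
    rcases h.lt_or_gt with hneg | hpos
    · have hu' : (a + t) / (1 - a * t) < 0 := div_neg_of_neg_of_pos hneg h1
      rw [hinv, Real.arctan_inv_of_neg hu', Real.sign_of_neg hneg]
      linarith
    · have hu' : 0 < (a + t) / (1 - a * t) := div_pos hpos h1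
      rw [hinv, Real.arctan_inv_of_pos hu', Real.sign_of_pos hpos]
      linarith
  · have ht : t ≠ 0 := by rintro rfl; simp at heq
    have ha : a = t⁻¹ := by field_simp; linarith
    have hz : (1 - a * t) / (a + t) = 0 := by rw [heq]; simp
    rw [hz, Real.arctan_zero, ha]
    rcases ht.lt_or_gt with htneg | htpos
    · have hneg : a + t < 0 := by
        rcases h.lt_or_gt with h' | h'; · exact h'
        exfalso
        have : t * (a + t) > 0 := by nlinarith
        nlinarith
      rw [ha] at hneg
      rw [Real.arctan_inv_of_neg htneg, Real.sign_of_neg hneg]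
      linarith
    · have hpos : 0 < a + t := by
        rcases h.lt_or_gt with h' | h'
        · exfalso; nlinarith
        · exact h'
      rw [ha] at hpos
      rw [Real.arctan_inv_of_pos htpos, Real.sign_of_pos hpos]
      linarith
  · have h1 : 1 - a * t < 0 := by linarith
    have hinv : (1 - a * t) / (a + t) = ((a + t) / (1 - a * t))⁻¹ := by
      rw [inv_div]
    rcases lt_or_gt_of_ne (show a ≠ 0 by rintro rfl; simp at hgt; linarith) with haneg | hapos
    · have htneg : t < 0 := by nlinarith
      have hsum : a + t < 0 := by linarith
      have hu : Real.arctan a + Real.arctan t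
          = Real.arctan ((a + t) / (1 - a * t)) - π :=
        Real.arctan_add_eq_sub_pi hgt haneg
      have hu' : 0 < (a + t) / (1 - a * t) := div_pos_of_neg_of_neg hsum h1
      rw [hinv, Real.arctan_inv_of_pos hu', Real.sign_of_neg hsum]
      linarith
    · have htpos : 0 < t := by nlinarith
      have hsum : 0 < a + t := by linarith
      have hu : Real.arctan a + Real.arctan t
          = Real.arctan ((a + t) / (1 - a * t)) + π :=
        Real.arctan_add_eq_add_pi hgt hapos
      have hu' : (a + t) / (1 - a * t) < 0 := div_neg_of_pos_of_neg hsum h1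
      rw [hinv, Real.arctan_inv_of_neg hu', Real.sign_of_pos hsum]
      linarith

theorem arctan_sum_eq_sign_product (ℓ₁ ℓ₂ κ : ℝ) (h₁ : ℓ₁ ≠ 0)
    (h₂ : ℓ₂ + κ * ℓ₁ ≠ 0)
    (m₁ m₂ : ℝ) (hm₁ : m₁ = (ℓ₂ + κ * ℓ₁) / Real.sqrt (1 + κ ^ 2))
    (hm₂ : m₂ = (ℓ₁ - κ * ℓ₂) / Real.sqrt (1 + κ ^ 2)) :
    2 / π * (Real.arctan (ℓ₂ / ℓ₁) + Real.arctan (m₂ / m₁) + Real.arctan κ)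
      = Real.sign ℓ₁ * Real.sign (ℓ₂ + κ * ℓ₁) := by
  have hs : Real.sqrt (1 + κ ^ 2) ≠ 0 := by positivity
  have hmm : m₂ / m₁ = (ℓ₁ - κ * ℓ₂) / (ℓ₂ + κ * ℓ₁) := by
    rw [hm₁, hm₂]
    field_simp
  set a := ℓ₂ / ℓ₁ with ha
  have hsum : a + κ = (ℓ₂ + κ * ℓ₁) / ℓ₁ := by rw [ha]; field_simp
  have hsumne : a + κ ≠ 0 := by rw [hsum]; exact div_ne_zero h₂ h₁
  have hratio : m₂ / m₁ = (1 - a * κ) / (a + κ) := by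
    rw [hmm, hsum, ha]
    rw [div_div_eq_mul_div, div_mul_eq_mul_div]
    congr 1
    field_simp
  have key := arctan_key a κ hsumne
  rw [hratio, key]
  have hsign : Real.sign (a + κ) = Real.sign ℓ₁ * Real.sign (ℓ₂ + κ * ℓ₁) := by
    rcases h₁.lt_or_gt with hl | hl <;> rcases h₂.lt_or_gt with hn | hn
    · have : 0 < a + κ := by rw [hsum]; exact div_pos_of_neg_of_neg hn hl
      rw [Real.sign_of_pos this, Real.sign_of_neg hl, Real.sign_of_neg hn]; ring
    · have : a + κ < 0 := by rw [hsum]; exact div_neg_of_pos_of_neg hn hl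
      rw [Real.sign_of_neg this, Real.sign_of_neg hl, Real.sign_of_pos hn]; ring
    · have : a + κ < 0 := by rw [hsum]; exact div_neg_of_neg_of_pos hn hl
      rw [Real.sign_of_neg this, Real.sign_of_pos hl, Real.sign_of_neg hn]; ring
    · have : 0 < a + κ := by rw [hsum]; exact div_pos hn hl
      rw [Real.sign_of_pos this, Real.sign_of_pos hl, Real.sign_of_pos hn]; ring
  rw [hsign.symm]
  field_simp
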